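/- arXiv:2201.12272 — 3 statements merged into one kernel-verified Lean document; each statement's English description precedes it below -/
import Mathlib

section
/- Let (Ω, π) be a probability space and let W : Ω² → ℝ be a bounded measurable symmetric function. Then sup over measurable A, B ⊆ Ω of |∫_{A×B} W dπ²| is at most 2 · sup over measurable A ⊆ Ω of |∫_{A×A} W dπ²|. -/
open MeasureTheory

private lemma cut_aux {Ω : Type*} [MeasurableSpace Ω]
    (μ : Measure Ω) [IsProbabilityMeasure μ] (W : Ω × Ω → ℝ)
    (hWmeas : Measurable W) (hWbdd : ∃ M : ℝ, ∀ p, |W p| ≤ M)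
    (hWsym : ∀ᵐ p ∂(μ.prod μ), W p = W p.swap)
    (A B : Set Ω) (hA : MeasurableSet A) (hB : MeasurableSet B) :
    |∫ p in A ×ˢ B, W p ∂(μ.prod μ)| ≤
      2 * sSup {r : ℝ | ∃ A : Set Ω, MeasurableSet A ∧
        r = |∫ p in A ×ˢ A, W p ∂(μ.prod μ)|} := by
  obtain ⟨M, hM⟩ := hWbdd
  have hInt : Integrable W (μ.prod μ) :=
    (integrable_const M).mono' hWmeas.aestronglyMeasurable
      (Filter.Eventually.of_forall fun p => by simpa using hM p)
  have hbdd : BddAbove {r : ℝ | ∃ A : Set Ω, MeasurableSet A ∧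
      r = |∫ p in A ×ˢ A, W p ∂(μ.prod μ)|} := by
    refine ⟨|M|, ?_⟩
    rintro r ⟨D, hD, rfl⟩
    have h1 : ‖∫ p in D ×ˢ D, W p ∂(μ.prod μ)‖ ≤ |M| * ((μ.prod μ) (D ×ˢ D)).toReal :=
      norm_setIntegral_le_of_norm_le_const (μ := μ.prod μ) (s := D ×ˢ D) (f := W)
        (measure_lt_top _ _) (fun x _ => by simpa using (hM x).trans (le_abs_self M))
    have h2 : ((μ.prod μ) (D ×ˢ D)).toReal ≤ 1 := by
      have := prob_le_one (μ := μ.prod μ) (s := D ×ˢ D)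
      simpa using ENNReal.toReal_mono (by norm_num) this
    calc |∫ p in D ×ˢ D, W p ∂(μ.prod μ)| ≤ |M| * ((μ.prod μ) (D ×ˢ D)).toReal := h1
      _ ≤ |M| * 1 := by exact mul_le_mul_of_nonneg_left h2 (abs_nonneg M)
      _ = |M| := mul_one _
  have hle : ∀ C : Set Ω, MeasurableSet C →
      |∫ p in C ×ˢ C, W p ∂(μ.prod μ)| ≤ sSup {r : ℝ | ∃ A : Set Ω, MeasurableSet A ∧
        r = |∫ p in A ×ˢ A, W p ∂(μ.prod μ)|} :=
    fun C hC => le_csSup hbdd ⟨C, hC, rfl⟩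
  -- additivity
  have addL : ∀ (S T U : Set Ω), MeasurableSet T → MeasurableSet U → Disjoint S T →
      (∫ p in (S ∪ T) ×ˢ U, W p ∂(μ.prod μ)) =
        (∫ p in S ×ˢ U, W p ∂(μ.prod μ)) + ∫ p in T ×ˢ U, W p ∂(μ.prod μ) := by
    intro S T U hT hU hST
    rw [Set.union_prod]
    exact setIntegral_union (Set.Disjoint.set_prod_left hST U U) (hT.prod hU)
      hInt.integrableOn hInt.integrableOn
  have addR : ∀ (U S T : Set Ω), MeasurableSet T → MeasurableSet U → Disjoint S T →
      (∫ p in U ×ˢ (S ∪ T), W p ∂(μ.prod μ)) =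
        (∫ p in U ×ˢ S, W p ∂(μ.prod μ)) + ∫ p in U ×ˢ T, W p ∂(μ.prod μ) := by
    intro U S T hT hU hST
    rw [Set.prod_union]
    exact setIntegral_union (Set.Disjoint.set_prod_right hST U U) (hU.prod hT)
      hInt.integrableOn hInt.integrableOn
  -- symmetry
  have hswap : ∀ (S T : Set Ω),
      (∫ p in S ×ˢ T, W p ∂(μ.prod μ)) = ∫ p in T ×ˢ S, W p ∂(μ.prod μ) := by
    intro S T
    have h1 : (∫ p in S ×ˢ T, W p.swap ∂(μ.prod μ)) = ∫ p in T ×ˢ S, W p ∂(μ.prod μ) := by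
      have := (Measure.measurePreserving_swap (μ := μ) (ν := μ)).setIntegral_preimage_emb
        MeasurableEquiv.prodComm.measurableEmbedding W (T ×ˢ S)
      simpa [Set.preimage_swap_prod] using this
    rw [← h1]
    exact integral_congr_ae (ae_restrict_of_ae hWsym)
  set P := A \ B with hP
  set Q := B \ A with hQ
  set R := A ∩ B with hR
  have hPm : MeasurableSet P := hA.diff hB
  have hQm : MeasurableSet Q := hB.diff hA
  have hRm : MeasurableSet R := hA.inter hB
  have hPQ : Disjoint P Q := by
    rw [Set.disjoint_left]; rintro x ⟨hx, hx'⟩ ⟨hx'', _⟩; exact hx' hx''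
  have hPR : Disjoint P R := by
    rw [Set.disjoint_left]; rintro x ⟨hx, hx'⟩ ⟨_, hx''⟩; exact hx' hx''
  have hQR : Disjoint Q R := by
    rw [Set.disjoint_left]; rintro x ⟨hx, hx'⟩ ⟨hx'', _⟩; exact hx' hx''
  have hAeq : A = P ∪ R := by
    ext x; simp only [hP, hR, Set.mem_union, Set.mem_diff, Set.mem_inter_iff]; tauto
  have hBeq : B = Q ∪ R := by
    ext x; simp only [hQ, hR, Set.mem_union, Set.mem_diff, Set.mem_inter_iff]; tauto
  have hUeq : A ∪ B = P ∪ (Q ∪ R) := by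
    ext x; simp only [hP, hQ, hR, Set.mem_union, Set.mem_diff, Set.mem_inter_iff]; tauto
  have hQRm : MeasurableSet (Q ∪ R) := hQm.union hRm
  have hPQR : Disjoint P (Q ∪ R) := Set.disjoint_union_right.mpr ⟨hPQ, hPR⟩
  -- expand F A B
  have hFAB : (∫ p in A ×ˢ B, W p ∂(μ.prod μ)) =
      (∫ p in P ×ˢ Q, W p ∂(μ.prod μ)) + (∫ p in P ×ˢ R, W p ∂(μ.prod μ)) +
      (∫ p in R ×ˢ Q, W p ∂(μ.prod μ)) + ∫ p in R ×ˢ R, W p ∂(μ.prod μ) := by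
    rw [hAeq, hBeq, addL P R (Q ∪ R) hRm hQRm hPR,
      addR P Q R hRm hPm hQR, addR R Q R hRm hRm hQR]
    ring
  -- expand F (A∪B) (A∪B)
  have hFU : (∫ p in (A ∪ B) ×ˢ (A ∪ B), W p ∂(μ.prod μ)) =
      (∫ p in P ×ˢ P, W p ∂(μ.prod μ)) + (∫ p in Q ×ˢ Q, W p ∂(μ.prod μ)) +
      (∫ p in R ×ˢ R, W p ∂(μ.prod μ)) +
      2 * (∫ p in P ×ˢ Q, W p ∂(μ.prod μ)) + 2 * (∫ p in P ×ˢ R, W p ∂(μ.prod μ)) +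
      2 * (∫ p in R ×ˢ Q, W p ∂(μ.prod μ)) := by
    rw [hUeq, addL P (Q ∪ R) (P ∪ (Q ∪ R)) hQRm (hPm.union hQRm) hPQR,
      addL Q R (P ∪ (Q ∪ R)) hRm (hPm.union hQRm) hQR,
      addR P P (Q ∪ R) hQRm hPm hPQR, addR P Q R hRm hPm hQR,
      addR Q P (Q ∪ R) hQRm hQm hPQR, addR Q Q R hRm hQm hQR,
      addR R P (Q ∪ R) hQRm hRm hPQR, addR R Q R hRm hRm hQR,
      hswap Q P, hswap R P, hswap Q R]
    ring
  set s := sSup {r : ℝ | ∃ A : Set Ω, MeasurableSet A ∧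
      r = |∫ p in A ×ˢ A, W p ∂(μ.prod μ)|} with hsdef
  have hUb := hle (A ∪ B) (hA.union hB)
  have hPb := hle P hPm
  have hQb := hle Q hQm
  have hRb := hle R hRm
  rw [abs_le] at hUb hPb hQb hRb ⊢
  constructor <;> [nlinarith [hFAB, hFU]; nlinarith [hFAB, hFU]]

/-- The cut norm of a bounded symmetric kernel is at most twice the supremum
of the absolute values of integrals over squares `A × A`. -/
theorem cutNorm_le_two_mul_sup_square {Ω : Type*} [MeasurableSpace Ω]
    (μ : Measure Ω) [IsProbabilityMeasure μ] (W : Ω × Ω → ℝ)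
    (hWmeas : Measurable W) (hWbdd : ∃ M : ℝ, ∀ p, |W p| ≤ M)
    (hWsym : ∀ᵐ p ∂(μ.prod μ), W p = W p.swap) :
    sSup {r : ℝ | ∃ A B : Set Ω, MeasurableSet A ∧ MeasurableSet B ∧
        r = |∫ p in A ×ˢ B, W p ∂(μ.prod μ)|} ≤
      2 * sSup {r : ℝ | ∃ A : Set Ω, MeasurableSet A ∧
        r = |∫ p in A ×ˢ A, W p ∂(μ.prod μ)|} := by
  refine Real.sSup_le ?_ ?_
  · rintro r ⟨A, B, hA, hB, rfl⟩
    exact cut_aux μ W hWmeas hWbdd hWsym A B hA hB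
  · have h0 : (0:ℝ) ∈ {r : ℝ | ∃ A : Set Ω, MeasurableSet A ∧
        r = |∫ p in A ×ˢ A, W p ∂(μ.prod μ)|} := ⟨∅, MeasurableSet.empty, by simp⟩
    have := cut_aux μ W hWmeas hWbdd hWsym ∅ ∅ MeasurableSet.empty MeasurableSet.empty
    simp only [Set.empty_prod, Measure.restrict_empty, integral_zero_measure, abs_zero] at this
    linarith
end

section
/- The space of graphons Gra = {W ∈ L^∞(Ω²) : W symmetric, 0 ≤ W ≤ 1 a.e.} equipped with the cut norm distance d_□(U,W) = sup_{A,B ⊆ Ω} |∫_{A×B}(U−W) dπ²| is a complete metric space. -/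
open MeasureTheory Filter Topology
open scoped ENNReal RealInnerProductSpace
set_option maxHeartbeats 1000000
set_option synthInstance.maxHeartbeats 400000

/-- The cut norm distance between two kernels. -/
noncomputable def cutDist {Ω : Type*} [MeasurableSpace Ω] (μ : Measure Ω)
    (U W : Ω × Ω → ℝ) : ℝ :=
  sSup {r : ℝ | ∃ A B : Set Ω, MeasurableSet A ∧ MeasurableSet B ∧
    r = |∫ p in A ×ˢ B, (U p - W p) ∂(μ.prod μ)|}

/-- A graphon: a measurable, a.e. symmetric kernel with values in [0,1] a.e. -/
def IsGraphon {Ω : Type*} [MeasurableSpace Ω] (μ : Measure Ω) (W : Ω × Ω → ℝ) : Prop :=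
  Measurable W ∧ (∀ᵐ p ∂(μ.prod μ), W p ∈ Set.Icc (0:ℝ) 1) ∧
    (∀ᵐ p ∂(μ.prod μ), W p = W p.swap)

section Aux

variable {Ω : Type*} [MeasurableSpace Ω] {μ : Measure Ω} [IsProbabilityMeasure μ]

lemma graphon_memLp {X : Ω × Ω → ℝ} (hX : IsGraphon μ X) : MemLp X 2 (μ.prod μ) := by
  refine MemLp.of_bound hX.1.aestronglyMeasurable 1 ?_
  filter_upwards [hX.2.1] with p hp
  rw [Real.norm_eq_abs, abs_le]
  exact ⟨by linarith [hp.1], hp.2⟩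

lemma graphon_integrable {X : Ω × Ω → ℝ} (hX : IsGraphon μ X) : Integrable X (μ.prod μ) :=
  (graphon_memLp hX).integrable one_le_two

lemma cutDist_bddAbove {X Y : Ω × Ω → ℝ} (hX : Integrable X (μ.prod μ))
    (hY : Integrable Y (μ.prod μ)) :
    BddAbove {r : ℝ | ∃ A B : Set Ω, MeasurableSet A ∧ MeasurableSet B ∧
      r = |∫ p in A ×ˢ B, (X p - Y p) ∂(μ.prod μ)|} := by
  refine ⟨∫ p, |X p - Y p| ∂(μ.prod μ), ?_⟩
  rintro r ⟨A, B, hA, hB, rfl⟩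
  calc |∫ p in A ×ˢ B, (X p - Y p) ∂(μ.prod μ)|
      ≤ ∫ p in A ×ˢ B, |X p - Y p| ∂(μ.prod μ) := by
        simpa [Real.norm_eq_abs] using
          norm_integral_le_integral_norm (μ := (μ.prod μ).restrict (A ×ˢ B))
            (fun p => X p - Y p)
    _ ≤ ∫ p, |X p - Y p| ∂(μ.prod μ) :=
        integral_mono_measure Measure.restrict_le_self
          (Eventually.of_forall fun p => abs_nonneg _) (hX.sub hY).abs

lemma abs_setIntegral_le_cutDist {X Y : Ω × Ω → ℝ} (hX : Integrable X (μ.prod μ))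
    (hY : Integrable Y (μ.prod μ)) {A B : Set Ω} (hA : MeasurableSet A) (hB : MeasurableSet B) :
    |∫ p in A ×ˢ B, (X p - Y p) ∂(μ.prod μ)| ≤ cutDist μ X Y :=
  le_csSup (cutDist_bddAbove hX hY) ⟨A, B, hA, hB, rfl⟩

lemma cutDist_nonneg {X Y : Ω × Ω → ℝ} (hX : Integrable X (μ.prod μ))
    (hY : Integrable Y (μ.prod μ)) : 0 ≤ cutDist μ X Y :=
  le_csSup (cutDist_bddAbove hX hY) ⟨∅, ∅, MeasurableSet.empty, MeasurableSet.empty, by simp⟩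

lemma cutDist_le {X Y : Ω × Ω → ℝ} {ε : ℝ} (hε : 0 ≤ ε)
    (h : ∀ A B : Set Ω, MeasurableSet A → MeasurableSet B →
      |∫ p in A ×ˢ B, (X p - Y p) ∂(μ.prod μ)| ≤ ε) :
    cutDist μ X Y ≤ ε :=
  Real.sSup_le (by rintro r ⟨A, B, hA, hB, rfl⟩; exact h A B hA hB) hε

end Aux

section Ind

variable {α : Type*} [MeasurableSpace α] {m : Measure α}

lemma indicatorConstLp_set_congr {s t : Set α} (h : s = t) (hs : MeasurableSet s)
    (hμs : m s ≠ ∞) (ht : MeasurableSet t) (hμt : m t ≠ ∞) (c : ℝ) :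
    indicatorConstLp 2 hs hμs c = indicatorConstLp 2 ht hμt c := by
  subst h; rfl

lemma indicatorConstLp_compl_eq {t : Set α} (ht : MeasurableSet t) (hμt : m t ≠ ∞)
    (hμtc : m tᶜ ≠ ∞) (hμu : m Set.univ ≠ ∞) (c : ℝ) :
    indicatorConstLp 2 ht.compl hμtc c =
      indicatorConstLp 2 MeasurableSet.univ hμu c - indicatorConstLp 2 ht hμt c := by
  ext1
  filter_upwards [indicatorConstLp_coeFn (p := 2) (hs := ht.compl) (hμs := hμtc) (c := c),
    indicatorConstLp_coeFn (p := 2) (hs := MeasurableSet.univ (α := α)) (hμs := hμu) (c := c),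
    indicatorConstLp_coeFn (p := 2) (hs := ht) (hμs := hμt) (c := c),
    Lp.coeFn_sub (indicatorConstLp 2 MeasurableSet.univ hμu c) (indicatorConstLp 2 ht hμt c)]
    with x h1 h2 h3 h4
  rw [h1, h4, Pi.sub_apply, h2, h3]
  by_cases hx : x ∈ t <;> simp [hx, Set.indicator_apply]

lemma coeFn_sum_range (F : ℕ → Lp ℝ 2 m) (k : ℕ) :
    ⇑(∑ i ∈ Finset.range k, F i) =ᵐ[m] fun x => ∑ i ∈ Finset.range k, F i x := by
  induction k with
  | zero =>
    simp only [Finset.range_zero, Finset.sum_empty]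
    exact Lp.coeFn_zero (E := ℝ) (p := 2) (μ := m)
  | succ k ih =>
    filter_upwards [Lp.coeFn_add (∑ i ∈ Finset.range k, F i) (F k), ih] with x h1 h2
    simp only [Finset.sum_range_succ, h1, Pi.add_apply, h2]

end Ind

lemma indicator_tail {α : Type*} (g : ℕ → Set α) (hd : Pairwise (Function.onFun Disjoint g)) (c : ℝ)
    (k : ℕ) (x : α) :
    Set.indicator (⋃ i, g i) (fun _ => c) x
        - ∑ i ∈ Finset.range k, Set.indicator (g i) (fun _ => c) x
      = Set.indicator (⋃ i, g (i + k)) (fun _ => c) x := by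
  by_cases hx : ∃ j, x ∈ g j
  · obtain ⟨j, hj⟩ := hx
    have huniq : ∀ i, x ∈ g i → i = j := fun i hi => by
      by_contra hne
      exact (Set.disjoint_left.mp (hd hne) hi) hj
    have hxU : x ∈ ⋃ i, g i := Set.mem_iUnion.mpr ⟨j, hj⟩
    rw [Set.indicator_of_mem hxU]
    have hsum : ∑ i ∈ Finset.range k, Set.indicator (g i) (fun _ => c) x
        = if j < k then c else 0 := by
      by_cases hjk : j < k
      · rw [if_pos hjk, Finset.sum_eq_single_of_mem j (Finset.mem_range.mpr hjk)]
        · exact Set.indicator_of_mem hj _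
        · exact fun i _ hij => Set.indicator_of_notMem (fun hxi => hij (huniq i hxi)) _
      · rw [if_neg hjk]
        refine Finset.sum_eq_zero fun i hi => Set.indicator_of_notMem (fun hxi => ?_) _
        exact hjk (huniq i hxi ▸ Finset.mem_range.mp hi)
    rw [hsum]
    by_cases hjk : j < k
    · rw [if_pos hjk, Set.indicator_of_notMem, sub_self]
      intro hmem
      obtain ⟨i, hi⟩ := Set.mem_iUnion.mp hmem
      have := huniq _ hi
      omega
    · rw [if_neg hjk, sub_zero, Set.indicator_of_mem]
      exact Set.mem_iUnion.mpr ⟨j - k, by rwa [Nat.sub_add_cancel (not_lt.mp hjk)]⟩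
  · push_neg at hx
    have h1 : x ∉ ⋃ i, g i := by
      intro h
      obtain ⟨i, hi⟩ := Set.mem_iUnion.mp h
      exact hx i hi
    have h2 : x ∉ ⋃ i, g (i + k) := by
      intro h
      obtain ⟨i, hi⟩ := Set.mem_iUnion.mp h
      exact hx _ hi
    rw [Set.indicator_of_notMem h1, Set.indicator_of_notMem h2,
      Finset.sum_eq_zero fun i _ => Set.indicator_of_notMem (hx i) _, sub_zero]

/-- The space of graphons with the cut norm distance is complete: every Cauchy
sequence of graphons converges in cut norm distance to a graphon. -/
theorem graphons_complete_cutNorm {Ω : Type*} [MeasurableSpace Ω]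
    [MeasurableSpace.CountablyGenerated Ω]
    (μ : Measure Ω) [IsProbabilityMeasure μ] [NullSingletonClass μ]
    (W : ℕ → Ω × Ω → ℝ) (hW : ∀ n, IsGraphon μ (W n))
    (hCauchy : ∀ ε > (0:ℝ), ∃ N : ℕ, ∀ m ≥ N, ∀ n ≥ N, cutDist μ (W m) (W n) < ε) :
    ∃ U : Ω × Ω → ℝ, IsGraphon μ U ∧
      Tendsto (fun n => cutDist μ (W n) U) atTop (nhds 0) := by
  classical
  set ν : Measure (Ω × Ω) := μ.prod μ with hνdef
  have hmem : ∀ n, MemLp (W n) 2 ν := fun n => graphon_memLp (hW n)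
  have hWint : ∀ n, Integrable (W n) ν := fun n => graphon_integrable (hW n)
  set f : ℕ → Lp ℝ 2 ν := fun n => (hmem n).toLp (W n) with hfdef
  -- norm bound
  have hfnorm : ∀ n, ‖f n‖ ≤ 1 := by
    intro n
    rw [hfdef, Lp.norm_toLp]
    refine ENNReal.toReal_le_of_le_ofReal zero_le_one ?_
    have h1 : eLpNorm (W n) 2 ν ≤ ν Set.univ ^ (2:ℝ≥0∞).toReal⁻¹ * ENNReal.ofReal 1 := by
      refine eLpNorm_le_of_ae_bound ?_
      filter_upwards [(hW n).2.1] with p hp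
      rw [Real.norm_eq_abs, abs_le]
      exact ⟨by linarith [hp.1], hp.2⟩
    simpa using h1
  -- inner products with indicators
  have hinner' : ∀ (g : Lp ℝ 2 ν) {s : Set (Ω × Ω)} (hs : MeasurableSet s),
      ⟪indicatorConstLp 2 hs (measure_ne_top ν s) (1:ℝ), g⟫ = ∫ p in s, g p ∂ν := by
    intro g s hs
    rw [L2.inner_indicatorConstLp_eq_setIntegral_inner]
    simp
  have hIndW : ∀ (n : ℕ) {s : Set (Ω × Ω)} (hs : MeasurableSet s),
      ⟪indicatorConstLp 2 hs (measure_ne_top ν s) (1:ℝ), f n⟫ = ∫ p in s, W n p ∂ν := by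
    intro n s hs
    rw [hinner' (f n) hs]
    exact setIntegral_congr_ae hs (((hmem n).coeFn_toLp).mono fun p hp _ => hp)
  -- the set of g for which the inner products form a Cauchy sequence
  set S : Set (Lp ℝ 2 ν) := {g | CauchySeq fun n => ⟪g, f n⟫} with hSdef
  have hS_zero : (0 : Lp ℝ 2 ν) ∈ S := by
    have he : (fun n => ⟪(0 : Lp ℝ 2 ν), f n⟫) = fun _ => (0:ℝ) := by
      funext n; exact inner_zero_left _
    simp only [hSdef, Set.mem_setOf_eq, he]
    exact cauchySeq_const 0
  have hS_add : ∀ {g h : Lp ℝ 2 ν}, g ∈ S → h ∈ S → g + h ∈ S := by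
    intro g h hg hh
    have he : (fun n => ⟪g + h, f n⟫) = fun n => ⟪g, f n⟫ + ⟪h, f n⟫ := by
      funext n; exact inner_add_left g h (f n)
    simp only [hSdef, Set.mem_setOf_eq, he] at hg hh ⊢
    exact hg.add hh
  have hS_sub : ∀ {g h : Lp ℝ 2 ν}, g ∈ S → h ∈ S → g - h ∈ S := by
    intro g h hg hh
    have he : (fun n => ⟪g - h, f n⟫) = fun n => ⟪g, f n⟫ + -⟪h, f n⟫ := by
      funext n; rw [inner_sub_left]; ring
    simp only [hSdef, Set.mem_setOf_eq] at hg hh ⊢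
    rw [he]
    exact hg.add hh.neg
  have hS_closed : IsClosed S := by
    refine IsSeqClosed.isClosed ?_
    intro u g hu hg_lim
    simp only [hSdef, Set.mem_setOf_eq] at hu ⊢
    rw [Metric.cauchySeq_iff]
    intro ε hε
    have hnorm0 : Tendsto (fun k => ‖u k - g‖) atTop (𝓝 0) := by
      simpa using (tendsto_iff_norm_sub_tendsto_zero.mp hg_lim)
    obtain ⟨k, hk⟩ := (hnorm0.eventually_lt_const (by positivity : (0:ℝ) < ε/4)).exists
    obtain ⟨N, hN⟩ := Metric.cauchySeq_iff.mp (hu k) (ε/4) (by positivity)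
    refine ⟨N, fun m hm n hn => ?_⟩
    have hbnd : ∀ j, |⟪g - u k, f j⟫| ≤ ε/4 := by
      intro j
      refine (abs_real_inner_le_norm _ _).trans ?_
      calc ‖g - u k‖ * ‖f j‖ ≤ ‖g - u k‖ * 1 :=
            mul_le_mul_of_nonneg_left (hfnorm j) (norm_nonneg _)
        _ ≤ ε/4 := by rw [mul_one, norm_sub_rev]; exact hk.le
    have he : ∀ j, ⟪g, f j⟫ = ⟪g - u k, f j⟫ + ⟪u k, f j⟫ := by
      intro j; rw [inner_sub_left]; ring
    rw [Real.dist_eq, he m, he n]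
    have hmn := hN m hm n hn
    rw [Real.dist_eq] at hmn
    have habs : |(⟪g - u k, f m⟫ + ⟪u k, f m⟫) - (⟪g - u k, f n⟫ + ⟪u k, f n⟫)|
        ≤ |⟪g - u k, f m⟫| + |⟪u k, f m⟫ - ⟪u k, f n⟫| + |⟪g - u k, f n⟫| := by
      have hrw : (⟪g - u k, f m⟫ + ⟪u k, f m⟫) - (⟪g - u k, f n⟫ + ⟪u k, f n⟫)
          = (⟪g - u k, f m⟫ + (⟪u k, f m⟫ - ⟪u k, f n⟫)) + -(⟪g - u k, f n⟫) := by ring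
      rw [hrw]
      refine (abs_add_le _ _).trans ?_
      rw [abs_neg]
      exact add_le_add (abs_add_le _ _) le_rfl
    have h1 := hbnd m
    have h2 := hbnd n
    linarith
  -- rectangles are in S
  have hrectS : ∀ {A B : Set Ω} (hA : MeasurableSet A) (hB : MeasurableSet B) (c : ℝ),
      indicatorConstLp 2 (hA.prod hB) (measure_ne_top ν _) c ∈ S := by
    intro A B hA hB c
    simp only [hSdef, Set.mem_setOf_eq]
    have hval : ∀ n, ⟪indicatorConstLp 2 (hA.prod hB) (measure_ne_top ν _) c, f n⟫
        = c * ∫ p in A ×ˢ B, W n p ∂ν := by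
      intro n
      rw [L2.inner_indicatorConstLp_eq_setIntegral_inner]
      simp only [RCLike.inner_apply, conj_trivial]
      rw [integral_mul_const, mul_comm]
      congr 1
      exact setIntegral_congr_ae (hA.prod hB) (((hmem n).coeFn_toLp).mono fun p hp _ => hp)
    rw [Metric.cauchySeq_iff]
    intro ε hε
    obtain ⟨N, hN⟩ := hCauchy (ε / (|c| + 1)) (by positivity)
    refine ⟨N, fun m hm n hn => ?_⟩
    rw [Real.dist_eq, hval m, hval n, ← mul_sub, abs_mul]
    have hint : ∫ p in A ×ˢ B, W m p ∂ν - ∫ p in A ×ˢ B, W n p ∂ν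
        = ∫ p in A ×ˢ B, (W m p - W n p) ∂ν :=
      (integral_sub (hWint m).integrableOn (hWint n).integrableOn).symm
    rw [hint]
    have hcd := (abs_setIntegral_le_cutDist (hWint m) (hWint n) hA hB).trans_lt (hN m hm n hn)
    have hc1 : (0:ℝ) < |c| + 1 := by positivity
    calc |c| * |∫ p in A ×ˢ B, (W m p - W n p) ∂ν| ≤ |c| * (ε / (|c| + 1)) :=
          mul_le_mul_of_nonneg_left hcd.le (abs_nonneg c)
      _ < (|c| + 1) * (ε / (|c| + 1)) :=
          mul_lt_mul_of_pos_right (lt_add_one _) (by positivity)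
      _ = ε := by field_simp
  -- indicators of all measurable sets are in S, via the π-system of rectangles
  have hunivS : ∀ c : ℝ,
      indicatorConstLp 2 (MeasurableSet.univ : MeasurableSet (Set.univ : Set (Ω × Ω)))
        (measure_ne_top ν _) c ∈ S := by
    intro c
    have h := hrectS (MeasurableSet.univ : MeasurableSet (Set.univ : Set Ω))
      MeasurableSet.univ c
    rwa [indicatorConstLp_set_congr Set.univ_prod_univ _ _ MeasurableSet.univ
      (measure_ne_top ν _) c] at h
  have hindS : ∀ (c : ℝ) ⦃s : Set (Ω × Ω)⦄ (hs : MeasurableSet s),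
      indicatorConstLp 2 hs (measure_ne_top ν s) c ∈ S := by
    intro c
    have key : ∀ ⦃t : Set (Ω × Ω)⦄, MeasurableSet t →
        ∀ (ht : MeasurableSet t), indicatorConstLp 2 ht (measure_ne_top ν t) c ∈ S := by
      refine MeasurableSpace.induction_on_inter generateFrom_prod.symm isPiSystem_prod
        ?_ ?_ ?_ ?_
      · intro h0
        have he : indicatorConstLp 2 h0 (measure_ne_top ν ∅) c = 0 := indicatorConstLp_empty
        rw [he]
        exact hS_zero
      · rintro t ⟨A, hA, B, hB, rfl⟩ ht
        exact hrectS hA hB c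
      · intro t htm hC htc
        rw [indicatorConstLp_compl_eq htm (measure_ne_top ν t) (measure_ne_top ν tᶜ)
          (measure_ne_top ν _) c]
        exact hS_sub (hunivS c) (hC htm)
      · intro g hdisj hmeas hCs hUm
        have htm : ∀ k, MeasurableSet (⋃ i, g (i + k)) :=
          fun k => MeasurableSet.iUnion fun i => hmeas _
        have hpart : ∀ k,
            (∑ i ∈ Finset.range k, indicatorConstLp 2 (hmeas i) (measure_ne_top ν _) c) ∈ S := by
          intro k
          induction k with
          | zero => simpa using hS_zero
          | succ k ih =>
            rw [Finset.sum_range_succ]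
            exact hS_add ih (hCs k (hmeas k))
        have htail : Tendsto (fun k => ν (⋃ i, g (i + k))) atTop (𝓝 0) := by
          have hshift : ∀ k, ν (⋃ i, g (i + k)) = ∑' i, ν (g (i + k)) := by
            intro k
            refine measure_iUnion ?_ (fun i => hmeas _)
            intro i j hij
            exact hdisj (by omega)
          simp only [hshift]
          exact ENNReal.tendsto_sum_nat_add (fun i => ν (g i))
            (by rw [← measure_iUnion hdisj hmeas]; exact measure_ne_top ν _)
        have hsumae : ∀ k,
            ⇑(∑ i ∈ Finset.range k, indicatorConstLp 2 (hmeas i) (measure_ne_top ν _) c)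
              =ᵐ[ν] fun x => ∑ i ∈ Finset.range k, Set.indicator (g i) (fun _ => c) x := by
          intro k
          induction k with
          | zero =>
            simp only [Finset.range_zero, Finset.sum_empty]
            exact Lp.coeFn_zero (E := ℝ) (p := 2) (μ := ν)
          | succ k ih =>
            filter_upwards [Lp.coeFn_add
              (∑ i ∈ Finset.range k, indicatorConstLp 2 (hmeas i) (measure_ne_top ν _) c)
              (indicatorConstLp 2 (hmeas k) (measure_ne_top ν _) c), ih,
              indicatorConstLp_coeFn (p := 2) (hs := hmeas k)
                (hμs := measure_ne_top ν _) (c := c)] with x h1 h2 h3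
            simp only [Finset.sum_range_succ, h1, Pi.add_apply, h2, h3]
        have hdiffae : ∀ k,
            ⇑(indicatorConstLp 2 (MeasurableSet.iUnion hmeas) (measure_ne_top ν _) c
              - ∑ i ∈ Finset.range k, indicatorConstLp 2 (hmeas i) (measure_ne_top ν _) c)
              =ᵐ[ν] ⇑(indicatorConstLp 2 (htm k) (measure_ne_top ν _) c) := by
          intro k
          filter_upwards [Lp.coeFn_sub
            (indicatorConstLp 2 (MeasurableSet.iUnion hmeas) (measure_ne_top ν _) c)
            (∑ i ∈ Finset.range k, indicatorConstLp 2 (hmeas i) (measure_ne_top ν _) c),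
            hsumae k,
            indicatorConstLp_coeFn (p := 2) (hs := MeasurableSet.iUnion hmeas)
              (hμs := measure_ne_top ν _) (c := c),
            indicatorConstLp_coeFn (p := 2) (hs := htm k)
              (hμs := measure_ne_top ν _) (c := c)] with x h1 h2 h3 h4
          rw [h1, Pi.sub_apply, h2, h3, h4]
          exact indicator_tail g hdisj c k x
        have hnormeq : ∀ k,
            ‖indicatorConstLp 2 (MeasurableSet.iUnion hmeas) (measure_ne_top ν _) c
              - ∑ i ∈ Finset.range k, indicatorConstLp 2 (hmeas i) (measure_ne_top ν _) c‖
            = ‖c‖ * (ν (⋃ i, g (i + k))).toReal ^ (1 / (2:ℝ≥0∞).toReal) := by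
          intro k
          rw [Lp.norm_def, eLpNorm_congr_ae (hdiffae k), ← Lp.norm_def,
            norm_indicatorConstLp (by norm_num) (by norm_num)]
          rfl
        have hnorm0 : Tendsto (fun k =>
            ‖indicatorConstLp 2 (MeasurableSet.iUnion hmeas) (measure_ne_top ν _) c
              - ∑ i ∈ Finset.range k, indicatorConstLp 2 (hmeas i) (measure_ne_top ν _) c‖)
            atTop (𝓝 0) := by
          simp only [hnormeq]
          have h1 : Tendsto (fun k => (ν (⋃ i, g (i + k))).toReal) atTop (𝓝 0) := by
            have h := (ENNReal.tendsto_toReal (a := 0) (by simp)).comp htail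
            simpa [Function.comp_def] using h
          have h2 : Tendsto (fun k => (ν (⋃ i, g (i + k))).toReal ^ (1 / (2:ℝ≥0∞).toReal))
              atTop (𝓝 0) := by
            have hexp : (0:ℝ) < 1 / (2:ℝ≥0∞).toReal := by norm_num
            have hc := (Real.continuousAt_rpow_const 0 (1 / (2:ℝ≥0∞).toReal)
              (Or.inr hexp.le)).tendsto.comp h1
            simpa [Real.zero_rpow hexp.ne', Function.comp_def] using hc
          simpa using h2.const_mul ‖c‖
        have htendsto : Tendsto (fun k =>
            ∑ i ∈ Finset.range k, indicatorConstLp 2 (hmeas i) (measure_ne_top ν _) c)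
            atTop (𝓝 (indicatorConstLp 2 (MeasurableSet.iUnion hmeas) (measure_ne_top ν _) c)) := by
          rw [tendsto_iff_norm_sub_tendsto_zero]
          simpa [norm_sub_rev] using hnorm0
        exact hS_closed.mem_of_tendsto htendsto (Eventually.of_forall hpart)
    exact fun s hs => key hs hs
  -- all of L² is in S
  have hallS : ∀ g : Lp ℝ 2 ν, g ∈ S := by
    refine Lp.induction (p := 2) (by norm_num) (fun g => g ∈ S) ?_ ?_ hS_closed
    · intro c s hs hμs
      rw [Lp.simpleFunc.coe_indicatorConst]
      exact hindS c hs
    · intro g h hg hh _ hgS hhS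
      exact hS_add hgS hhS
  have hCg : ∀ g : Lp ℝ 2 ν, CauchySeq fun n => ⟪g, f n⟫ := hallS
  -- the limit functional
  set Λ : Lp ℝ 2 ν → ℝ := fun g => limUnder atTop fun n => ⟪g, f n⟫ with hΛdef
  have hΛt : ∀ g, Tendsto (fun n => ⟪g, f n⟫) atTop (𝓝 (Λ g)) :=
    fun g => (hCg g).tendsto_limUnder
  have hΛadd : ∀ g h : Lp ℝ 2 ν, Λ (g + h) = Λ g + Λ h := by
    intro g h
    refine tendsto_nhds_unique (hΛt (g + h)) ?_
    have := (hΛt g).add (hΛt h)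
    simpa only [← inner_add_left] using this
  have hΛsmul : ∀ (c : ℝ) (g : Lp ℝ 2 ν), Λ (c • g) = c * Λ g := by
    intro c g
    refine tendsto_nhds_unique (hΛt (c • g)) ?_
    have := (hΛt g).const_mul c
    simpa only [← real_inner_smul_left] using this
  have hΛbound : ∀ g : Lp ℝ 2 ν, |Λ g| ≤ ‖g‖ := by
    intro g
    refine le_of_tendsto (hΛt g).abs (Eventually.of_forall fun n => ?_)
    calc |⟪g, f n⟫| ≤ ‖g‖ * ‖f n‖ := abs_real_inner_le_norm _ _
      _ ≤ ‖g‖ * 1 := mul_le_mul_of_nonneg_left (hfnorm n) (norm_nonneg _)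
      _ = ‖g‖ := mul_one _
  set Λlin : Lp ℝ 2 ν →ₗ[ℝ] ℝ :=
    { toFun := Λ, map_add' := hΛadd, map_smul' := hΛsmul } with hΛlindef
  set Λ' : Lp ℝ 2 ν →L[ℝ] ℝ :=
    LinearMap.mkContinuous Λlin 1 (fun g => by
      rw [one_mul]
      simpa [Real.norm_eq_abs, hΛlindef] using hΛbound g) with hΛ'def
  set U' : Lp ℝ 2 ν := (InnerProductSpace.toDual ℝ (Lp ℝ 2 ν)).symm Λ' with hU'def
  have hU'inner : ∀ g : Lp ℝ 2 ν, ⟪g, U'⟫ = Λ g := by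
    intro g
    rw [real_inner_comm, hU'def]
    exact InnerProductSpace.toDual_symm_apply
  have hlim : ∀ g : Lp ℝ 2 ν, Tendsto (fun n => ⟪g, f n⟫) atTop (𝓝 ⟪g, U'⟫) := by
    intro g
    rw [hU'inner g]
    exact hΛt g
  -- transfer to set integrals
  have hsetlim : ∀ {s : Set (Ω × Ω)} (hs : MeasurableSet s),
      Tendsto (fun n => ∫ p in s, W n p ∂ν) atTop (𝓝 (∫ p in s, U' p ∂ν)) := by
    intro s hs
    have h := hlim (indicatorConstLp 2 hs (measure_ne_top ν s) (1:ℝ))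
    rw [hinner' U' hs] at h
    refine h.congr fun n => ?_
    exact hIndW n hs
  -- properties of the representative U₀
  set U₀ : Ω × Ω → ℝ := ⇑U' with hU₀def
  have hU₀meas : Measurable U₀ := (Lp.stronglyMeasurable U').measurable
  have hU₀int : Integrable U₀ ν := (Lp.memLp U').integrable one_le_two
  have hWpos : ∀ n, 0 ≤ᵐ[ν] W n := fun n => (hW n).2.1.mono fun p hp => hp.1
  have hWle1 : ∀ n, W n ≤ᵐ[ν] fun _ => (1:ℝ) := fun n => (hW n).2.1.mono fun p hp => hp.2
  have hU₀nonneg : 0 ≤ᵐ[ν] U₀ := by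
    refine ae_nonneg_of_forall_setIntegral_nonneg hU₀int fun s hs _ => ?_
    refine ge_of_tendsto (hsetlim hs) (Eventually.of_forall fun n => ?_)
    exact setIntegral_nonneg_ae hs ((hWpos n).mono fun p hp _ => hp)
  have hU₀le1 : U₀ ≤ᵐ[ν] fun _ => (1:ℝ) := by
    have h : 0 ≤ᵐ[ν] fun p => 1 - U₀ p := by
      refine ae_nonneg_of_forall_setIntegral_nonneg ((integrable_const 1).sub hU₀int)
        fun s hs _ => ?_
      rw [integral_sub (integrable_const 1).integrableOn hU₀int.integrableOn]
      have hle : ∫ p in s, U₀ p ∂ν ≤ ∫ p in s, (1:ℝ) ∂ν := by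
        refine le_of_tendsto (hsetlim hs) (Eventually.of_forall fun n => ?_)
        exact integral_mono_ae (hWint n).integrableOn (integrable_const 1).integrableOn
          (ae_restrict_of_ae (hWle1 n))
      linarith
    filter_upwards [h] with p hp
    simpa using hp
  have hU₀Icc : ∀ᵐ p ∂ν, U₀ p ∈ Set.Icc (0:ℝ) 1 := by
    filter_upwards [hU₀nonneg, hU₀le1] with p h1 h2
    exact ⟨h1, h2⟩
  -- swap machinery
  have hmp : MeasurePreserving Prod.swap ν ν := Measure.measurePreserving_swap
  have hemb : MeasurableEmbedding (Prod.swap : Ω × Ω → Ω × Ω) :=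
    MeasurableEquiv.prodComm.measurableEmbedding
  have hmapswap : Measure.map Prod.swap ν = ν := Measure.prod_swap
  have hIccswap : ∀ᵐ p ∂ν, U₀ p.swap ∈ Set.Icc (0:ℝ) 1 := by
    have hmset : MeasurableSet {q : Ω × Ω | U₀ q ∈ Set.Icc (0:ℝ) 1} :=
      hU₀meas measurableSet_Icc
    have h : ∀ᵐ q ∂(Measure.map Prod.swap ν), U₀ q ∈ Set.Icc (0:ℝ) 1 := by
      rw [hmapswap]; exact hU₀Icc
    exact (MeasureTheory.ae_map_iff measurable_swap.aemeasurable hmset).mp h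
  -- the symmetrized limit
  set U : Ω × Ω → ℝ := fun p => (U₀ p + U₀ p.swap) / 2 with hUdef
  have hUmeas : Measurable U := ((hU₀meas.add (hU₀meas.comp measurable_swap)).div_const 2)
  have hUIcc : ∀ᵐ p ∂ν, U p ∈ Set.Icc (0:ℝ) 1 := by
    filter_upwards [hU₀Icc, hIccswap] with p h1 h2
    constructor
    · have := h1.1; have := h2.1; simp only [hUdef]; linarith
    · have := h1.2; have := h2.2; simp only [hUdef]; linarith
  have hUsymm : ∀ᵐ p ∂ν, U p = U p.swap := by
    refine Eventually.of_forall fun p => ?_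
    simp only [hUdef, Prod.swap_swap]
    ring
  have hUgraphon : IsGraphon μ U := ⟨hUmeas, hUIcc, hUsymm⟩
  have hUint : Integrable U ν := graphon_integrable hUgraphon
  have hswapint : Integrable (fun p : Ω × Ω => U₀ p.swap) ν :=
    (hmp.integrable_comp_emb hemb).mpr hU₀int
  -- on rectangles the integral of U agrees with that of U₀
  have hUrect : ∀ {A B : Set Ω}, MeasurableSet A → MeasurableSet B →
      ∫ p in A ×ˢ B, U p ∂ν = ∫ p in A ×ˢ B, U₀ p ∂ν := by
    intro A B hA hB
    have h1 : ∫ p in A ×ˢ B, U₀ p.swap ∂ν = ∫ q in B ×ˢ A, U₀ q ∂ν := by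
      have h := hmp.setIntegral_preimage_emb hemb U₀ (B ×ˢ A)
      rwa [Set.preimage_swap_prod] at h
    have h2 : ∀ m, ∫ q in B ×ˢ A, W m q ∂ν = ∫ p in A ×ˢ B, W m p ∂ν := by
      intro m
      have ha : ∫ p in A ×ˢ B, W m p.swap ∂ν = ∫ q in B ×ˢ A, W m q ∂ν := by
        have h := hmp.setIntegral_preimage_emb hemb (W m) (B ×ˢ A)
        rwa [Set.preimage_swap_prod] at h
      rw [← ha]
      refine setIntegral_congr_ae (hA.prod hB) ?_
      filter_upwards [(hW m).2.2] with p hp _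
      exact hp.symm
    have h3 : ∫ q in B ×ˢ A, U₀ q ∂ν = ∫ p in A ×ˢ B, U₀ p ∂ν := by
      exact tendsto_nhds_unique ((hsetlim (hB.prod hA)).congr fun m => h2 m)
        (hsetlim (hA.prod hB))
    calc ∫ p in A ×ˢ B, U p ∂ν
        = (∫ p in A ×ˢ B, U₀ p ∂ν + ∫ p in A ×ˢ B, U₀ p.swap ∂ν) / 2 := by
          simp only [hUdef]
          rw [integral_div, integral_add hU₀int.integrableOn hswapint.integrableOn]
      _ = ∫ p in A ×ˢ B, U₀ p ∂ν := by rw [h1, h3]; ring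
  -- conclusion
  refine ⟨U, hUgraphon, ?_⟩
  rw [Metric.tendsto_atTop]
  intro ε hε
  obtain ⟨N, hN⟩ := hCauchy (ε / 2) (by linarith)
  refine ⟨N, fun n hn => ?_⟩
  have hnonneg : 0 ≤ cutDist μ (W n) U := cutDist_nonneg (hWint n) hUint
  have hle : cutDist μ (W n) U ≤ ε / 2 := by
    refine cutDist_le (by linarith) fun A B hA hB => ?_
    rw [integral_sub (hWint n).integrableOn hUint.integrableOn, hUrect hA hB]
    have hconv : Tendsto
        (fun m => |∫ p in A ×ˢ B, W n p ∂ν - ∫ p in A ×ˢ B, W m p ∂ν|) atTop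
        (𝓝 |∫ p in A ×ˢ B, W n p ∂ν - ∫ p in A ×ˢ B, U₀ p ∂ν|) :=
      (tendsto_const_nhds.sub (hsetlim (hA.prod hB))).abs
    refine le_of_tendsto hconv (eventually_atTop.mpr ⟨N, fun m hm => ?_⟩)
    rw [← integral_sub (hWint n).integrableOn (hWint m).integrableOn]
    exact (abs_setIntegral_le_cutDist (hWint n) (hWint m) hA hB).trans (hN n hn m hm).le
  rw [Real.dist_eq, sub_zero, abs_of_nonneg hnonneg]
  linarith
end

section
/- Let (Ω, π) be a probability space and let U, U₁, U₂, … be bounded symmetric measurable kernels on Ω² with ‖U_n − U‖_□ → 0. Suppose A ⊆ Ω has positive measure and is a twin-set for each U_n, i.e. there is a conull A'_n ⊆ A such that for all x, x' ∈ A'_n the functions U_n(x,·) and U_n(x',·) agree a.e. Then A is a twin-set for U. -/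
open MeasureTheory Filter Set

/-- The cut norm of a kernel. -/
noncomputable def cutNorm {Ω : Type*} [MeasurableSpace Ω] (μ : Measure Ω)
    (W : Ω × Ω → ℝ) : ℝ :=
  sSup {r : ℝ | ∃ S T : Set Ω, MeasurableSet S ∧ MeasurableSet T ∧
    r = |∫ p in S ×ˢ T, W p ∂(μ.prod μ)|}

/-- `A` is a twin-set of a kernel `W`: there is a conull subset `A' ⊆ A` such
that all sections `W(x, ·)` with `x ∈ A'` agree a.e. -/
def IsTwinSet {Ω : Type*} [MeasurableSpace Ω] (μ : Measure Ω)
    (W : Ω × Ω → ℝ) (A : Set Ω) : Prop :=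
  ∃ A' ⊆ A, μ (A \ A') = 0 ∧
    ∀ x ∈ A', ∀ x' ∈ A', ∀ᵐ y ∂μ, W (x, y) = W (x', y)

/-- The π-system generated by a countable collection is countable. -/
lemma countable_generatePiSystem' {Ω : Type*} {S : Set (Set Ω)} (hS : S.Countable) :
    (generatePiSystem S).Countable := by
  have h : generatePiSystem S ⊆ (fun t => ⋂₀ t) '' {t : Set (Set Ω) | t.Finite ∧ t ⊆ S} := by
    intro s hs
    induction hs with
    | base h => exact ⟨{_}, ⟨finite_singleton _, singleton_subset_iff.2 h⟩, sInter_singleton _⟩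
    | inter h_s h_t h_ne ihs iht =>
      obtain ⟨t1, ⟨ht1f, ht1S⟩, rfl⟩ := ihs
      obtain ⟨t2, ⟨ht2f, ht2S⟩, rfl⟩ := iht
      exact ⟨t1 ∪ t2, ⟨ht1f.union ht2f, union_subset ht1S ht2S⟩, by simp [sInter_union]⟩
  exact ((Set.countable_setOf_finite_subset hS).image _).mono h

lemma integrable_of_abs_le' {α : Type*} [MeasurableSpace α] {ν : Measure α} [IsFiniteMeasure ν]
    {f : α → ℝ} (hf : Measurable f) {M : ℝ} (h : ∀ x, |f x| ≤ M) : Integrable f ν :=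
  (integrable_const M).mono' hf.aestronglyMeasurable
    (Filter.Eventually.of_forall fun x => by simpa [Real.norm_eq_abs] using h x)

lemma abs_setIntegral_le_cutNorm' {Ω : Type*} [MeasurableSpace Ω] {μ : Measure Ω}
    [IsProbabilityMeasure μ] {W : Ω × Ω → ℝ} (hW : Integrable W (μ.prod μ))
    {S T : Set Ω} (hS : MeasurableSet S) (hT : MeasurableSet T) :
    |∫ p in S ×ˢ T, W p ∂(μ.prod μ)| ≤ cutNorm μ W := by
  apply le_csSup
  · refine ⟨∫ p, |W p| ∂(μ.prod μ), ?_⟩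
    rintro r ⟨S', T', hS', hT', rfl⟩
    calc |∫ p in S' ×ˢ T', W p ∂(μ.prod μ)|
        ≤ ∫ p in S' ×ˢ T', |W p| ∂(μ.prod μ) := by
          simpa [Real.norm_eq_abs] using
            norm_integral_le_integral_norm (μ := (μ.prod μ).restrict (S' ×ˢ T')) W
      _ ≤ ∫ p, |W p| ∂(μ.prod μ) :=
          setIntegral_le_integral hW.abs (Filter.Eventually.of_forall fun p => abs_nonneg _)
  · exact ⟨S, T, hS, hT, rfl⟩

/-- A positive-measure set that is a twin-set of every kernel in a sequence
converging in cut norm is a twin-set of the limit kernel. -/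
theorem isTwinSet_of_cutNorm_tendsto {Ω : Type*} [MeasurableSpace Ω]
    [MeasurableSpace.CountablyGenerated Ω]
    (μ : Measure Ω) [IsProbabilityMeasure μ]
    (U : Ω × Ω → ℝ) (Un : ℕ → Ω × Ω → ℝ)
    (hUmeas : Measurable U) (hUnmeas : ∀ n, Measurable (Un n))
    (hUbdd : ∃ M : ℝ, ∀ p, |U p| ≤ M) (hUnbdd : ∀ n, ∃ M : ℝ, ∀ p, |Un n p| ≤ M)
    (hUsym : ∀ᵐ p ∂(μ.prod μ), U p = U p.swap)
    (hUnsym : ∀ n, ∀ᵐ p ∂(μ.prod μ), Un n p = Un n p.swap)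
    (hconv : Tendsto (fun n => cutNorm μ (fun p => Un n p - U p)) atTop (nhds 0))
    (A : Set Ω) (hA : MeasurableSet A) (hApos : 0 < μ A)
    (htwin : ∀ n, IsTwinSet μ (Un n) A) :
    IsTwinSet μ U A := by
  classical
  obtain ⟨M, hM⟩ := hUbdd
  have hUint : Integrable U (μ.prod μ) := integrable_of_abs_le' hUmeas hM
  have hUnint : ∀ n, Integrable (Un n) (μ.prod μ) := fun n => by
    obtain ⟨Mn, hMn⟩ := hUnbdd n; exact integrable_of_abs_le' (hUnmeas n) hMn
  have hApos' : (0 : ℝ) < (μ A).toReal := ENNReal.toReal_pos hApos.ne' (measure_ne_top μ A)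
  have hsecint : ∀ x : Ω, Integrable (fun y => U (x, y)) μ := fun x =>
    integrable_of_abs_le' (hUmeas.comp measurable_prodMk_left) (fun y => hM _)
  -- Step 1: convergence of rectangle integrals
  have hconv' : ∀ S T : Set Ω, MeasurableSet S → MeasurableSet T →
      Tendsto (fun n => ∫ p in S ×ˢ T, Un n p ∂(μ.prod μ)) atTop
        (nhds (∫ p in S ×ˢ T, U p ∂(μ.prod μ))) := by
    intro S T hS hT
    have key : ∀ n, |∫ p in S ×ˢ T, Un n p ∂(μ.prod μ) - ∫ p in S ×ˢ T, U p ∂(μ.prod μ)|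
        ≤ cutNorm μ (fun p => Un n p - U p) := by
      intro n
      have h := abs_setIntegral_le_cutNorm' (μ := μ) (W := fun p => Un n p - U p)
        (((hUnint n).sub hUint).congr (Filter.Eventually.of_forall fun p => rfl)) hS hT
      rwa [integral_sub ((hUnint n).integrableOn) (hUint.integrableOn)] at h
    have h0 : Tendsto (fun n => |∫ p in S ×ˢ T, Un n p ∂(μ.prod μ)
        - ∫ p in S ×ˢ T, U p ∂(μ.prod μ)|) atTop (nhds 0) :=
      squeeze_zero (fun n => abs_nonneg _) key hconv
    have h1 : Tendsto (fun n => ∫ p in S ×ˢ T, Un n p ∂(μ.prod μ)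
        - ∫ p in S ×ˢ T, U p ∂(μ.prod μ)) atTop (nhds 0) :=
      (tendsto_zero_iff_abs_tendsto_zero _).2 h0
    simpa using h1.add_const (∫ p in S ×ˢ T, U p ∂(μ.prod μ))
  -- Step 2: the key identity for U on subrectangles of A × Ω
  have keyA : ∀ S₁ S₂ T : Set Ω, MeasurableSet S₁ → MeasurableSet S₂ → MeasurableSet T →
      S₁ ⊆ A → S₂ ⊆ A →
      (μ S₂).toReal * ∫ p in S₁ ×ˢ T, U p ∂(μ.prod μ)
        = (μ S₁).toReal * ∫ p in S₂ ×ˢ T, U p ∂(μ.prod μ) := by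
    intro S₁ S₂ T hS₁ hS₂ hT hS₁A hS₂A
    have hn : ∀ n, (μ S₁).toReal * ∫ p in S₂ ×ˢ T, Un n p ∂(μ.prod μ)
        = (μ S₂).toReal * ∫ p in S₁ ×ˢ T, Un n p ∂(μ.prod μ) := by
      intro n
      obtain ⟨A', hA'sub, hA'null, hA'twin⟩ := htwin n
      have hA'ne : A'.Nonempty := by
        rcases Set.eq_empty_or_nonempty A' with h | h
        · exfalso
          rw [h, Set.diff_empty] at hA'null
          exact hApos.ne' hA'null
        · exact h
      obtain ⟨x₀, hx₀⟩ := hA'ne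
      have hsec : ∀ S : Set Ω, S ⊆ A → MeasurableSet S →
          ∫ p in S ×ˢ T, Un n p ∂(μ.prod μ)
            = (μ S).toReal * ∫ y in T, Un n (x₀, y) ∂μ := by
        intro S hSA hS
        rw [setIntegral_prod _ ((hUnint n).integrableOn)]
        have hmemA' : ∀ᵐ x ∂(μ.restrict S), x ∈ A' := by
          rw [ae_iff, Measure.restrict_apply' hS]
          refine measure_mono_null (fun x hx => ?_) hA'null
          exact ⟨hSA hx.2, hx.1⟩
        have heq : ∀ᵐ x ∂(μ.restrict S),
            (∫ y in T, Un n (x, y) ∂μ) = ∫ y in T, Un n (x₀, y) ∂μ := by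
          filter_upwards [hmemA'] with x hx
          exact integral_congr_ae (ae_restrict_of_ae (hA'twin x hx x₀ hx₀))
        rw [integral_congr_ae heq, setIntegral_const, smul_eq_mul, measureReal_def]
      rw [hsec S₁ hS₁A hS₁, hsec S₂ hS₂A hS₂]; ring
    have l1 := (hconv' S₁ T hS₁ hT).const_mul ((μ S₂).toReal)
    have l2 := (hconv' S₂ T hS₂ hT).const_mul ((μ S₁).toReal)
    exact (tendsto_nhds_unique (l2.congr hn) l1).symm
  -- Step 3: for each measurable T, x ↦ ∫_T U(x,·) is a.e. constant on A
  have hFmeas : ∀ T : Set Ω, Measurable fun x => ∫ y in T, U (x, y) ∂μ := by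
    intro T
    exact (hUmeas.stronglyMeasurable.integral_prod_right' (ν := μ.restrict T)).measurable
  have hFbdd : ∀ (T : Set Ω) (x : Ω), |∫ y in T, U (x, y) ∂μ| ≤ |M| := by
    intro T x
    calc |∫ y in T, U (x, y) ∂μ| ≤ ∫ y in T, |U (x, y)| ∂μ := by
          simpa [Real.norm_eq_abs] using
            norm_integral_le_integral_norm (μ := μ.restrict T) (fun y => U (x, y))
      _ ≤ ∫ y, |U (x, y)| ∂μ := setIntegral_le_integral (hsecint x).abs
            (Filter.Eventually.of_forall fun y => abs_nonneg _)
      _ ≤ ∫ _y, |M| ∂μ := integral_mono (hsecint x).abs (integrable_const _)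
            (fun y => (hM _).trans (le_abs_self M))
      _ = |M| := by simp
  have hFint : ∀ T : Set Ω, Integrable (fun x => ∫ y in T, U (x, y) ∂μ) μ :=
    fun T => integrable_of_abs_le' (hFmeas T) (hFbdd T)
  have keyB : ∀ T : Set Ω, MeasurableSet T → ∀ᵐ x ∂(μ.restrict A),
      (∫ y in T, U (x, y) ∂μ)
        = (∫ x in A, ∫ y in T, U (x, y) ∂μ ∂μ) / (μ A).toReal := by
    intro T hT
    set F : Ω → ℝ := fun x => ∫ y in T, U (x, y) ∂μ with hFdef
    set c : ℝ := (∫ x in A, F x ∂μ) / (μ A).toReal with hcdef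
    have hSint : ∀ S : Set Ω, MeasurableSet S → S ⊆ A →
        ∫ x in S, F x ∂μ = (μ S).toReal * c := by
      intro S hS hSA
      have h := keyA S A T hS hA hT hSA (subset_refl A)
      rw [setIntegral_prod _ hUint.integrableOn, setIntegral_prod _ hUint.integrableOn] at h
      have h2 : (μ A).toReal * (∫ x in S, F x ∂μ)
          = (μ A).toReal * ((μ S).toReal * c) := by
        rw [h, hcdef]
        field_simp
        rfl
      exact mul_left_cancel₀ hApos'.ne' h2
    have hnull : ∀ (P : Set Ω) (g : Ω → ℝ), MeasurableSet P → Integrable g μ →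
        (∀ x ∈ P, 0 < g x) → (∫ x in P, g x ∂μ = 0) → μ P = 0 := by
      intro P g hP hg hgpos hgzero
      have h0 : g =ᵐ[μ.restrict P] 0 := by
        refine (setIntegral_eq_zero_iff_of_nonneg_ae ?_ hg.integrableOn).1 hgzero
        filter_upwards [ae_restrict_mem hP] with x hx
        exact (hgpos x hx).le
      have hout : ∀ᵐ x ∂(μ.restrict P), x ∉ P := by
        filter_upwards [h0] with x hx hxP
        exact (hgpos x hxP).ne' hx
      have h2 := ae_iff.1 hout
      rw [Measure.restrict_apply' hP] at h2
      simpa [not_not, Set.setOf_mem_eq, Set.inter_self] using h2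
    have hP₁0 : μ (A ∩ {x | c < F x}) = 0 := by
      have hP₁m : MeasurableSet (A ∩ {x | c < F x}) :=
        hA.inter (measurableSet_lt measurable_const (hFmeas T))
      refine hnull _ (fun x => F x - c) hP₁m ((hFint T).sub (integrable_const c))
        (fun x hx => sub_pos.2 hx.2) ?_
      rw [integral_sub ((hFint T).integrableOn)
        (integrableOn_const (C := c) (measure_ne_top _ _)),
        hSint _ hP₁m Set.inter_subset_left, setIntegral_const, smul_eq_mul, measureReal_def, sub_self]
    have hP₂0 : μ (A ∩ {x | F x < c}) = 0 := by
      have hP₂m : MeasurableSet (A ∩ {x | F x < c}) :=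
        hA.inter (measurableSet_lt (hFmeas T) measurable_const)
      refine hnull _ (fun x => c - F x) hP₂m ((integrable_const c).sub (hFint T))
        (fun x hx => sub_pos.2 hx.2) ?_
      rw [integral_sub (integrableOn_const (C := c) (measure_ne_top _ _))
        ((hFint T).integrableOn),
        hSint _ hP₂m Set.inter_subset_left, setIntegral_const, smul_eq_mul, measureReal_def, sub_self]
    rw [ae_iff, Measure.restrict_apply' hA]
    refine measure_mono_null (fun x hx => ?_) (measure_union_null hP₁0 hP₂0)
    rcases lt_or_gt_of_ne hx.1 with h | h
    · exact Or.inr ⟨hx.2, h⟩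
    · exact Or.inl ⟨hx.2, h⟩
  -- Step 4: countable generating π-system and the common null set
  obtain ⟨b0, hb0c, hb0gen⟩ : ∃ b : Set (Set Ω), b.Countable ∧
      ‹MeasurableSpace Ω› = MeasurableSpace.generateFrom b :=
    ⟨MeasurableSpace.countableGeneratingSet Ω,
      MeasurableSpace.countable_countableGeneratingSet,
      (MeasurableSpace.generateFrom_countableGeneratingSet).symm⟩
  have hpgen : ‹MeasurableSpace Ω› = MeasurableSpace.generateFrom (generatePiSystem b0) := by
    rw [generateFrom_generatePiSystem_eq]; exact hb0gen
  have hpmeas : ∀ t ∈ generatePiSystem b0, MeasurableSet t := by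
    intro t ht
    have h := generateFrom_measurableSet_of_generatePiSystem t ht
    rwa [← hb0gen] at h
  set q : Set (Set Ω) := insert Set.univ (generatePiSystem b0) with hqdef
  have hqc : q.Countable := (countable_generatePiSystem' hb0c).insert _
  have hqmeas : ∀ t ∈ q, MeasurableSet t := by
    rintro t (rfl | ht)
    · exact MeasurableSet.univ
    · exact hpmeas t ht
  set cfun : Set Ω → ℝ :=
    fun T => (∫ x in A, ∫ y in T, U (x, y) ∂μ ∂μ) / (μ A).toReal with hcfun
  set N : Set Ω := ⋃ T ∈ q, ({x | (∫ y in T, U (x, y) ∂μ) ≠ cfun T} ∩ A) with hNdef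
  have hN : μ N = 0 := by
    rw [hNdef, measure_biUnion_null_iff hqc]
    intro T hT
    have h := keyB T (hqmeas T hT)
    rw [ae_iff, Measure.restrict_apply' hA] at h
    exact h
  refine ⟨A \ N, Set.diff_subset, measure_mono_null (fun x hx => ?_) hN, ?_⟩
  · exact Classical.byContradiction fun hN' => hx.2 ⟨hx.1, hN'⟩
  · intro x hx x' hx'
    have husingle : ∀ z ∈ A \ N, ∀ T ∈ q, (∫ y in T, U (z, y) ∂μ) = cfun T := by
      intro z hz T hT
      by_contra hne
      exact hz.2 (Set.mem_biUnion hT ⟨hne, hz.1⟩)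
    have hq : ∀ T ∈ q, (∫ y in T, U (x, y) ∂μ) = ∫ y in T, U (x', y) ∂μ := fun T hT =>
      (husingle x hx T hT).trans (husingle x' hx' T hT).symm
    have huniv : (∫ y, U (x, y) ∂μ) = ∫ y, U (x', y) ∂μ := by
      have h := hq Set.univ (Set.mem_insert _ _)
      simpa using h
    have hall : ∀ E : Set Ω, MeasurableSet E →
        (∫ y in E, U (x, y) ∂μ) = ∫ y in E, U (x', y) ∂μ := by
      intro E hE
      refine MeasurableSpace.induction_on_inter
          (C := fun E _ => (∫ y in E, U (x, y) ∂μ) = ∫ y in E, U (x', y) ∂μ) hpgen (isPiSystem_generatePiSystem b0)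
        (by simp) (fun t ht => hq t (Set.mem_insert_of_mem _ ht))
        (fun t ht ihf => ?_) (fun f hd hm ih => ?_) E hE
      · have h1 := integral_add_compl ht (hsecint x)
        have h2 := integral_add_compl ht (hsecint x')
        linarith [huniv]
      · rw [integral_iUnion hm hd (hsecint x).integrableOn,
          integral_iUnion hm hd (hsecint x').integrableOn]
        exact tsum_congr ih
    exact ae_eq_of_forall_setIntegral_eq_of_sigmaFinite
      (fun s _ _ => (hsecint x).integrableOn)
      (fun s _ _ => (hsecint x').integrableOn)
      (fun s hs _ => hall s hs)
end
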